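/- Counting version of the Θ recursion: let I(A) denote the number of unordered increasing trees on a finite set A of positive integers, weighted by ∏_{i ∈ A∖{min A}} |h_T(i)|, i.e., I(A) = ∑_T ∏_{i≠min A} |h_T(i)|, with I(A) = 1 when |A| = 1. Then I(A) = |A|^{|A|-2} for |A| ≥ 2, and for any fixed a ∈ A∖{min A}, |A|^{|A|-2} = ∑_{B ⊔ C = A, min A ∈ C, a ∈ B} |B|·|B|^{|B|-2}·|C|^{|C|-2} where k^{k-2} is interpreted as 1 when k = 1. -/

import Mathlib

/-- The minimum of a finite set of naturals (`0` for the empty set). -/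
def fmin (B : Finset ℕ) : ℕ := WithTop.untopD 0 B.min

open Finset fwdDiff Polynomial



lemma fwdDiff_pow_succ (j : ℕ) :
    Δ_[1] (fun k : ℕ => ((k : ℤ) + 1) ^ j) =
      ∑ i ∈ range j, (j.choose i : ℤ) • (fun k : ℕ => ((k : ℤ) + 1) ^ i) := by
  funext k
  have h : ((k + 1 : ℕ) : ℤ) + 1 = ((k : ℤ) + 1) + 1 := by push_cast; ring
  simp only [fwdDiff, Finset.sum_apply, Pi.smul_apply, smul_eq_mul, h]
  rw [add_pow]
  rw [Finset.sum_range_succ]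
  simp [mul_comm]

lemma fwdDiff_iter_pow_eq_zero : ∀ m : ℕ, ∀ j < m,
    (Δ_[1])^[m] (fun k : ℕ => ((k : ℤ) + 1) ^ j) = 0 := by
  intro m
  induction m using Nat.strong_induction_on with
  | _ m IH =>
    intro j hj
    obtain ⟨m, rfl⟩ : ∃ m', m = m' + 1 := ⟨m - 1, by omega⟩
    rw [Function.iterate_succ_apply, fwdDiff_pow_succ, fwdDiff_iter_finset_sum]
    refine Finset.sum_eq_zero fun i hi => ?_
    have hi' := Finset.mem_range.mp hi
    rw [fwdDiff_iter_const_smul, IH m (by omega) i (by omega : i < m), smul_zero]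

lemma alt_sum_pow (m j : ℕ) (hj : j < m) :
    ∑ k ∈ range (m + 1), (-1 : ℤ) ^ (m - k) * (m.choose k : ℤ) * ((k : ℤ) + 1) ^ j = 0 := by
  have h := fwdDiff_iter_eq_sum_shift (1 : ℕ) (fun k : ℕ => ((k : ℤ) + 1) ^ j) m 0
  rw [fwdDiff_iter_pow_eq_zero m j hj] at h
  have : (0 : ℤ) = ∑ k ∈ range (m + 1),
      ((-1 : ℤ) ^ (m - k) * (m.choose k : ℤ)) • ((((0 + k • 1 : ℕ) : ℤ)) + 1) ^ j := h
  simpa [smul_eq_mul, mul_assoc] using this.symm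
lemma poly_eq_of_deriv_eq {p q : Polynomial ℤ}
    (h : Polynomial.derivative p = Polynomial.derivative q) {t : ℤ}
    (ht : p.eval t = q.eval t) : p = q := by
  have h0 : Polynomial.derivative (p - q) = 0 := by rw [map_sub, h, sub_self]
  obtain ⟨a, hae⟩ : ∃ a, p - q = Polynomial.C a :=
    ⟨_, Polynomial.eq_C_of_natDegree_eq_zero
      (Polynomial.natDegree_eq_zero_of_derivative_eq_zero h0)⟩
  have ha : a = 0 := by
    have := congrArg (Polynomial.eval t) hae
    simp only [Polynomial.eval_sub, ht, sub_self, Polynomial.eval_C] at this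
    exact this.symm
  rw [ha, map_zero] at hae
  exact sub_eq_zero.mp hae

lemma abel_gen : ∀ (m : ℕ) (c : ℤ),
    ∑ k ∈ range (m + 1),
      Polynomial.C ((m.choose k : ℤ) * ((k : ℤ) + 1) ^ (k - 1)) *
        (X + Polynomial.C (c + ((m - k : ℕ) : ℤ))) ^ (m - k)
      = (X + Polynomial.C (c + (m : ℤ) + 1)) ^ m := by
  intro m
  induction m with
  | zero => intro c; simp
  | succ m IH =>
    intro c
    apply poly_eq_of_deriv_eq (t := -(c + (m : ℤ) + 2))
    · -- derivatives agree
      rw [map_sum, Polynomial.derivative_X_add_C_pow]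
      have hstep : ∀ k ∈ range (m + 2),
          Polynomial.derivative (Polynomial.C (((m+1).choose k : ℤ) * ((k : ℤ) + 1) ^ (k - 1)) *
            (X + Polynomial.C (c + ((m + 1 - k : ℕ) : ℤ))) ^ (m + 1 - k)) =
          Polynomial.C (((m+1).choose k : ℤ) * ((k : ℤ) + 1) ^ (k - 1)) *
            (Polynomial.C ((m + 1 - k : ℕ) : ℤ) *
              (X + Polynomial.C (c + ((m + 1 - k : ℕ) : ℤ))) ^ (m + 1 - k - 1)) := by
        intro k _
        rw [Polynomial.derivative_C_mul, Polynomial.derivative_X_add_C_pow]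
      rw [Finset.sum_congr rfl hstep, Finset.sum_range_succ]
      simp only [Nat.sub_self, Nat.cast_zero, map_zero, zero_mul, mul_zero, add_zero]
      have hterm : ∀ k ∈ range (m + 1),
          Polynomial.C (((m+1).choose k : ℤ) * ((k : ℤ) + 1) ^ (k - 1)) *
            (Polynomial.C ((m + 1 - k : ℕ) : ℤ) *
              (X + Polynomial.C (c + ((m + 1 - k : ℕ) : ℤ))) ^ (m + 1 - k - 1)) =
          Polynomial.C ((m : ℤ) + 1) *
            (Polynomial.C ((m.choose k : ℤ) * ((k : ℤ) + 1) ^ (k - 1)) *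
              (X + Polynomial.C ((c + 1) + ((m - k : ℕ) : ℤ))) ^ (m - k)) := by
        intro k hk
        have hk' : k ≤ m := by simpa [Nat.lt_succ_iff] using hk
        have h1 : m + 1 - k - 1 = m - k := by omega
        have h2 : c + ((m + 1 - k : ℕ) : ℤ) = (c + 1) + ((m - k : ℕ) : ℤ) := by omega
        have h3 : (((m+1).choose k : ℤ)) * ((m + 1 - k : ℕ) : ℤ) = ((m : ℤ) + 1) * (m.choose k : ℤ) := by
          have h0 := Nat.choose_mul_succ_eq m k
          have h4 : (m+1).choose k * (m + 1 - k) = (m + 1) * m.choose k := by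
            rw [← h0]; ring
          exact_mod_cast congrArg (Nat.cast : ℕ → ℤ) h4
        rw [h1, h2, ← mul_assoc, ← mul_assoc, ← Polynomial.C_mul, ← Polynomial.C_mul]
        congr 2
        linear_combination ((k : ℤ) + 1) ^ (k - 1) * h3
      rw [Finset.sum_congr rfl hterm, ← Finset.mul_sum, IH (c + 1), Nat.add_sub_cancel]
      have h5 : (c + 1) + (m : ℤ) + 1 = c + ((m + 1 : ℕ) : ℤ) + 1 := by push_cast; ring
      rw [h5]
      norm_cast
    · -- evaluation at t
      rw [Polynomial.eval_pow, Polynomial.eval_add, Polynomial.eval_X, Polynomial.eval_C,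
        Polynomial.eval_finset_sum]
      have hz : (-(c + (m : ℤ) + 2) + (c + ((m + 1 : ℕ) : ℤ) + 1)) = 0 := by push_cast; ring
      rw [hz, zero_pow (Nat.succ_ne_zero m)]
      have hterm : ∀ k ∈ range (m + 2),
          Polynomial.eval (-(c + (m : ℤ) + 2))
            (Polynomial.C (((m+1).choose k : ℤ) * ((k : ℤ) + 1) ^ (k - 1)) *
              (X + Polynomial.C (c + ((m + 1 - k : ℕ) : ℤ))) ^ (m + 1 - k)) =
          (-1 : ℤ) ^ (m + 1 - k) * ((m+1).choose k : ℤ) * ((k : ℤ) + 1) ^ m := by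
        intro k hk
        have hk' : k ≤ m + 1 := by simpa [Nat.lt_succ_iff] using hk
        rw [Polynomial.eval_mul, Polynomial.eval_C, Polynomial.eval_pow, Polynomial.eval_add,
          Polynomial.eval_X, Polynomial.eval_C]
        have h6 : -(c + (m : ℤ) + 2) + (c + ((m + 1 - k : ℕ) : ℤ)) = -((k : ℤ) + 1) := by
          have hc : ((m + 1 - k : ℕ) : ℤ) = (m : ℤ) + 1 - k := by omega
          rw [hc]; ring
        rw [h6, neg_pow]
        have h7 : ((k : ℤ) + 1) ^ (k - 1) * ((k : ℤ) + 1) ^ (m + 1 - k) = ((k : ℤ) + 1) ^ m := by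
          rcases Nat.eq_zero_or_pos k with rfl | hkpos
          · simp
          · rw [← pow_add]; congr 1; omega
        linear_combination ((-1 : ℤ)) ^ (m + 1 - k) * ((m+1).choose k : ℤ) * h7
      rw [Finset.sum_congr rfl hterm]
      exact alt_sum_pow (m + 1) m (Nat.lt_succ_self m)
lemma key_identity (m : ℕ) :
    ∑ j ∈ range (m + 1), m.choose j * (j + 1) ^ j * (m - j + 1) ^ (m - j - 1) = (m + 2) ^ m := by
  have h1 : ∑ k ∈ range (m + 1), m.choose k * (k + 1) ^ (k - 1) * (m - k + 1) ^ (m - k)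
      = (m + 2) ^ m := by
    have h2 := congrArg (Polynomial.eval (1 : ℤ)) (abel_gen m 0)
    rw [Polynomial.eval_finset_sum] at h2
    simp only [Polynomial.eval_mul, Polynomial.eval_C, Polynomial.eval_pow,
      Polynomial.eval_add, Polynomial.eval_X, zero_add] at h2
    have h3 : ((∑ k ∈ range (m + 1), m.choose k * (k + 1) ^ (k - 1) * (m - k + 1) ^ (m - k) : ℕ) : ℤ)
        = (((m + 2) ^ m : ℕ) : ℤ) := by
      push_cast
      rw [show ((m : ℤ) + 2) ^ m = (1 + ((m : ℤ) + 1)) ^ m by ring, ← h2]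
      exact Finset.sum_congr rfl fun k hk => by
        rw [show ((m - k : ℕ) : ℤ) + 1 = 1 + ((m - k : ℕ) : ℤ) from by ring]
    exact_mod_cast h3
  rw [← h1, ← Finset.sum_range_reflect
    (fun k => m.choose k * (k + 1) ^ (k - 1) * (m - k + 1) ^ (m - k)) (m + 1)]
  refine Finset.sum_congr rfl fun j hj => ?_
  have hj' : j ≤ m := by simpa [Nat.lt_succ_iff] using hj
  have e1 : m + 1 - 1 - j = m - j := by omega
  have e2 : m - (m - j) = j := by omega
  simp only [e1, e2, Nat.choose_symm hj']
  ring

lemma fmin_eq_min' {B : Finset ℕ} (h : B.Nonempty) : fmin B = B.min' h := by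
  rw [fmin, ← Finset.coe_min' h]; rfl

lemma fmin_mem {B : Finset ℕ} (h : B.Nonempty) : fmin B ∈ B := by
  rw [fmin_eq_min' h]; exact B.min'_mem h

lemma fmin_le {B : Finset ℕ} {i : ℕ} (hi : i ∈ B) : fmin B ≤ i := by
  rw [fmin_eq_min' ⟨i, hi⟩]; exact B.min'_le i hi

lemma fmin_eq_of {B : Finset ℕ} {x : ℕ} (hx : x ∈ B) (hle : ∀ y ∈ B, x ≤ y) : fmin B = x :=
  le_antisymm (fmin_le hx) (hle _ (fmin_mem ⟨x, hx⟩))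

open scoped Classical in
lemma sum_split (A : Finset ℕ) (hA : 2 ≤ A.card) (a : ℕ) (ha : a ∈ A) (hane : a ≠ fmin A)
    (f : ℕ → ℕ) :
    ∑ B ∈ A.powerset.filter (fun B => a ∈ B ∧ fmin A ∉ B), f B.card
      = ∑ j ∈ range (A.card - 1), (A.card - 2).choose j * f (j + 1) := by
  have hm0 : fmin A ∈ A := fmin_mem ⟨a, ha⟩
  set D := (A.erase (fmin A)).erase a with hD
  have haD : a ∈ A.erase (fmin A) := Finset.mem_erase.mpr ⟨hane, ha⟩
  have hDcard : D.card = A.card - 2 := by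
    rw [hD, Finset.card_erase_of_mem haD, Finset.card_erase_of_mem hm0]
    omega
  have hstep : ∑ B ∈ A.powerset.filter (fun B => a ∈ B ∧ fmin A ∉ B), f B.card
      = ∑ S ∈ D.powerset, f (S.card + 1) := by
    refine Finset.sum_bij' (fun B _ => B.erase a) (fun S _ => insert a S) ?_ ?_ ?_ ?_ ?_
    · intro B hB
      simp only [Finset.mem_filter, Finset.mem_powerset] at hB ⊢
      intro x hx
      rw [Finset.mem_erase] at hx
      rw [hD, Finset.mem_erase, Finset.mem_erase]
      refine ⟨hx.1, fun hxm => ?_, hB.1 hx.2⟩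
      exact hB.2.2 (hxm ▸ hx.2)
    · intro S hS
      simp only [Finset.mem_powerset] at hS
      simp only [Finset.mem_filter, Finset.mem_powerset]
      have hSD : ∀ x ∈ S, x ∈ D := fun x hx => hS hx
      refine ⟨?_, Finset.mem_insert_self _ _, ?_⟩
      · intro x hx
        rcases Finset.mem_insert.mp hx with rfl | hxS
        · exact ha
        · have := hSD x hxS
          rw [hD, Finset.mem_erase, Finset.mem_erase] at this
          exact this.2.2
      · intro hmem
        rcases Finset.mem_insert.mp hmem with h' | h'
        · exact hane h'.symm
        · have := hSD _ h'
          rw [hD, Finset.mem_erase, Finset.mem_erase] at this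
          exact this.2.1 rfl
    · intro B hB
      simp only [Finset.mem_filter] at hB
      exact Finset.insert_erase hB.2.1
    · intro S hS
      apply Finset.erase_insert
      intro haS
      simp only [Finset.mem_powerset] at hS
      have := hS haS
      rw [hD, Finset.mem_erase] at this
      exact this.1 rfl
    · intro B hB
      simp only [Finset.mem_filter] at hB
      rw [Finset.card_erase_of_mem hB.2.1]
      congr 1
      have : 1 ≤ B.card := Finset.card_pos.mpr ⟨a, hB.2.1⟩
      omega
  rw [hstep, Finset.sum_powerset]
  have hrange : D.card + 1 = A.card - 1 := by omega
  rw [hDcard] at hrange ⊢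
  rw [hrange]
  refine Finset.sum_congr rfl fun j hj => ?_
  have : ∀ S ∈ Finset.powersetCard j D, f (S.card + 1) = f (j + 1) := by
    intro S hS
    rw [(Finset.mem_powersetCard.mp hS).2]
  rw [Finset.sum_congr rfl this, Finset.sum_const, Finset.card_powersetCard, smul_eq_mul, hDcard]
open scoped Classical

namespace IncTree

open Finset

variable {S : Finset ℕ}

def Valid (S : Finset ℕ) (p : ↥S → ↥S) : Prop :=
  ∀ v : ↥S, ((v : ℕ) = fmin S → p v = v) ∧ ((v : ℕ) ≠ fmin S → (p v : ℕ) < (v : ℕ))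

noncomputable def Sub (p : ↥S → ↥S) (v : ↥S) : Finset ↥S :=
  Finset.univ.filter (fun u => ∃ k : ℕ, p^[k] u = v)

lemma mem_Sub {p : ↥S → ↥S} {u v : ↥S} : u ∈ Sub p v ↔ ∃ k : ℕ, p^[k] u = v := by
  simp [Sub]

lemma self_mem_Sub {p : ↥S → ↥S} (v : ↥S) : v ∈ Sub p v := mem_Sub.mpr ⟨0, rfl⟩

lemma Sub_trans {p : ↥S → ↥S} {u v w : ↥S} (h1 : u ∈ Sub p v) (h2 : v ∈ Sub p w) :
    u ∈ Sub p w := by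
  obtain ⟨k1, hk1⟩ := mem_Sub.mp h1
  obtain ⟨k2, hk2⟩ := mem_Sub.mp h2
  exact mem_Sub.mpr ⟨k2 + k1, by rw [Function.iterate_add_apply, hk1, hk2]⟩

variable {p : ↥S → ↥S}

lemma apply_le (hp : Valid S p) (u : ↥S) : (p u : ℕ) ≤ (u : ℕ) := by
  by_cases h : (u : ℕ) = fmin S
  · rw [(hp u).1 h]
  · exact le_of_lt ((hp u).2 h)

lemma iterate_le (hp : Valid S p) (k : ℕ) (u : ↥S) : (p^[k] u : ℕ) ≤ (u : ℕ) := by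
  induction k generalizing u with
  | zero => simp
  | succ k IH =>
    rw [Function.iterate_succ_apply]
    exact le_trans (IH (p u)) (apply_le hp u)

lemma Sub_le {u v : ↥S} (hp : Valid S p) (h : u ∈ Sub p v) : (v : ℕ) ≤ (u : ℕ) := by
  obtain ⟨k, hk⟩ := mem_Sub.mp h
  simpa [hk] using iterate_le hp k u

lemma iterate_fix (hp : Valid S p) {u : ↥S} (h : (u : ℕ) = fmin S) (k : ℕ) : p^[k] u = u := by
  induction k with
  | zero => rfl
  | succ k IH => rw [Function.iterate_succ_apply', IH, (hp u).1 h]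

lemma reach_root (hp : Valid S p) (u : ↥S) : ∃ k : ℕ, ((p^[k] u : ↥S) : ℕ) = fmin S := by
  obtain ⟨n, hn⟩ : ∃ n, (u : ℕ) ≤ n := ⟨u, le_rfl⟩
  induction n generalizing u with
  | zero =>
    have hu0 : (u : ℕ) = 0 := by omega
    have hf := fmin_le u.2
    refine ⟨0, ?_⟩
    simp only [Function.iterate_zero, id_eq]
    omega
  | succ n IH =>
    by_cases h : (u : ℕ) = fmin S
    · exact ⟨0, h⟩
    · have h1 : (p u : ℕ) < (u : ℕ) := (hp u).2 h
      obtain ⟨k, hk⟩ := IH (p u) (by omega)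
      exact ⟨k + 1, by rwa [Function.iterate_succ_apply]⟩

end IncTree

namespace IncTree

open Finset

section Decomp

variable {A : Finset ℕ} (aa : ↥A)

noncomputable def KOf (p : ↥A → ↥A) : ℕ :=
  if h : ∃ k : ℕ, ((p^[k] aa : ↥A) : ℕ) = fmin A then Nat.find h else 0

noncomputable def rOf (p : ↥A → ↥A) : ↥A := p^[KOf aa p - 1] aa

noncomputable def BsetOf (p : ↥A → ↥A) : Finset ℕ :=
  (Sub p (rOf aa p)).image (fun u : ↥A => (u : ℕ))

variable {aa} {p : ↥A → ↥A}

lemma KOf_spec (hp : Valid A p) :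
    ((p^[KOf aa p] aa : ↥A) : ℕ) = fmin A ∧
      ∀ i < KOf aa p, ((p^[i] aa : ↥A) : ℕ) ≠ fmin A := by
  have h : ∃ k : ℕ, ((p^[k] aa : ↥A) : ℕ) = fmin A := reach_root hp aa
  rw [KOf, dif_pos h]
  exact ⟨Nat.find_spec h, fun i hi => Nat.find_min h hi⟩

lemma KOf_pos (hp : Valid A p) (haa : (aa : ℕ) ≠ fmin A) : 1 ≤ KOf aa p := by
  rcases Nat.eq_zero_or_pos (KOf aa p) with h | h
  · exfalso
    have h1 := (KOf_spec (aa := aa) hp).1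
    rw [h] at h1
    exact haa (by simpa using h1)
  · exact h

lemma rOf_ne (hp : Valid A p) (haa : (aa : ℕ) ≠ fmin A) : ((rOf aa p : ↥A) : ℕ) ≠ fmin A :=
  (KOf_spec (aa := aa) hp).2 _ (by have := KOf_pos hp haa; omega)

lemma p_rOf (hp : Valid A p) (haa : (aa : ℕ) ≠ fmin A) :
    ((p (rOf aa p) : ↥A) : ℕ) = fmin A := by
  have h1 := (KOf_spec (aa := aa) hp).1
  have h2 : KOf aa p = (KOf aa p - 1) + 1 := by have := KOf_pos hp haa; omega
  rw [h2, Function.iterate_succ_apply'] at h1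
  exact h1

lemma aa_mem_Sub_rOf : aa ∈ Sub p (rOf aa p) := mem_Sub.mpr ⟨KOf aa p - 1, rfl⟩

/-- uniqueness of the branch vertex -/
lemma rOf_unique (hp : Valid A p) (haa : (aa : ℕ) ≠ fmin A) {x : ↥A}
    (hx : (x : ℕ) ≠ fmin A) (hpx : ((p x : ↥A) : ℕ) = fmin A)
    (hreach : ∃ i : ℕ, p^[i] aa = x) : x = rOf aa p := by
  obtain ⟨i, hi⟩ := hreach
  have hK := KOf_spec (aa := aa) hp
  -- p^[i+1] aa has coe fmin A
  have hi1 : ((p^[i+1] aa : ↥A) : ℕ) = fmin A := by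
    rw [Function.iterate_succ_apply', hi]; exact hpx
  -- i + 1 ≥ KOf
  have hge : KOf aa p ≤ i + 1 := by
    by_contra hcon
    exact hK.2 (i+1) (by omega) hi1
  -- i < KOf : otherwise p^[i] aa = fmin-element
  have hlt : i < KOf aa p := by
    by_contra hcon
    push_neg at hcon
    have : p^[i] aa = p^[i - KOf aa p] (p^[KOf aa p] aa) := by
      rw [← Function.iterate_add_apply]
      congr 1
      omega
    have hfix : p^[i - KOf aa p] (p^[KOf aa p] aa) = p^[KOf aa p] aa :=
      iterate_fix hp hK.1 _
    rw [this, hfix] at hi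
    exact hx (by rw [← hi]; exact hK.1)
  have : i = KOf aa p - 1 := by omega
  rw [← hi, this]; rfl

end Decomp

/-- inclusion of a subset's coercion -/
def incl {A D : Finset ℕ} (h : D ⊆ A) (v : ↥D) : ↥A := ⟨v, h v.2⟩

lemma incl_injective {A D : Finset ℕ} (h : D ⊆ A) : Function.Injective (incl h) := by
  intro x y hxy
  have : (x : ℕ) = (y : ℕ) := congrArg (fun t : ↥A => (t : ℕ)) hxy
  exact Subtype.ext this

/-- restriction of a parent function to a subset -/
noncomputable def restrict {A D : Finset ℕ} (hDA : D ⊆ A) (p : ↥A → ↥A) : ↥D → ↥D := fun v =>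
  if h : ((p (incl hDA v) : ↥A) : ℕ) ∈ D ∧ (v : ℕ) ≠ fmin D
  then ⟨((p (incl hDA v) : ↥A) : ℕ), h.1⟩ else v

end IncTree

namespace IncTree

open Finset

section Transfer

variable {A B : Finset ℕ} {aa : ↥A} {p : ↥A → ↥A}

lemma BsetOf_subset : BsetOf aa p ⊆ A := by
  intro x hx
  rw [BsetOf] at hx
  obtain ⟨u, _, rfl⟩ := Finset.mem_image.mp hx
  exact u.2

lemma mem_BsetOf {u : ↥A} : (u : ℕ) ∈ BsetOf aa p ↔ u ∈ Sub p (rOf aa p) := by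
  rw [BsetOf, Finset.mem_image]
  constructor
  · rintro ⟨w, hw, hwu⟩
    rwa [show w = u from Subtype.ext hwu] at hw
  · intro hu
    exact ⟨u, hu, rfl⟩

lemma fmin_not_mem_BsetOf (hp : Valid A p) (haa : (aa : ℕ) ≠ fmin A) :
    fmin A ∉ BsetOf aa p := by
  intro hmem
  rw [BsetOf, Finset.mem_image] at hmem
  obtain ⟨u, hu, hcoe⟩ := hmem
  obtain ⟨k, hk⟩ := mem_Sub.mp hu
  have hfix : p^[k] u = u := iterate_fix hp hcoe k
  rw [hfix] at hk
  exact rOf_ne hp haa (by rw [← hk, hcoe])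

variable (hp : Valid A p) (haa : (aa : ℕ) ≠ fmin A) (hBset : BsetOf aa p = B)

include hp haa hBset

lemma mem_B_iff (u : ↥A) : (u : ℕ) ∈ B ↔ u ∈ Sub p (rOf aa p) := by
  rw [← hBset]; exact mem_BsetOf

lemma hm0B : fmin A ∉ B := hBset ▸ fmin_not_mem_BsetOf hp haa

lemma hBA : B ⊆ A := hBset ▸ BsetOf_subset

lemma R_coe : ((rOf aa p : ↥A) : ℕ) = fmin B := by
  refine (fmin_eq_of ?_ ?_).symm
  · exact (mem_B_iff hp haa hBset _).mpr (self_mem_Sub _)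
  · intro y hy
    have hyA : y ∈ A := hBA hp haa hBset hy
    have : (⟨y, hyA⟩ : ↥A) ∈ Sub p (rOf aa p) := (mem_B_iff hp haa hBset _).mp hy
    exact Sub_le hp this

lemma closure_B {u : ↥A} (hu : (u : ℕ) ∈ B) (hne : (u : ℕ) ≠ fmin B) :
    ((p u : ↥A) : ℕ) ∈ B := by
  obtain ⟨k, hk⟩ := mem_Sub.mp ((mem_B_iff hp haa hBset u).mp hu)
  rcases k with _ | k
  · exact absurd (congrArg (fun t : ↥A => (t : ℕ)) hk)
      (by show ¬ ((u : ℕ) = ((rOf aa p : ↥A) : ℕ)); rw [R_coe hp haa hBset]; exact hne)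
  · rw [Function.iterate_succ_apply] at hk
    exact (mem_B_iff hp haa hBset _).mpr (mem_Sub.mpr ⟨k, hk⟩)

lemma closure_C {u : ↥A} (hu : (u : ℕ) ∉ B) : ((p u : ↥A) : ℕ) ∉ B := by
  intro hmem
  apply hu
  refine (mem_B_iff hp haa hBset u).mpr
    (Sub_trans (mem_Sub.mpr ⟨1, rfl⟩) ((mem_B_iff hp haa hBset _).mp hmem))

omit hp haa hBset in
lemma restrict_fix {D : Finset ℕ} (hDA : D ⊆ A) {v : ↥D} (hv : (v : ℕ) = fmin D) :
    restrict hDA p v = v := by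
  rw [restrict, dif_neg]
  simp [hv]

omit hp haa hBset in
lemma restrict_iterate_fix {D : Finset ℕ} (hDA : D ⊆ A) {v : ↥D} (hv : (v : ℕ) = fmin D)
    (k : ℕ) : (restrict hDA p)^[k] v = v := by
  induction k with
  | zero => rfl
  | succ k IH =>
    rw [Function.iterate_succ_apply', IH, restrict, dif_neg]
    simp [hv]

lemma match_B : ∀ (k : ℕ) (u : ↥B),
    (∀ i < k, (((restrict (hBA hp haa hBset) p)^[i] u : ↥B) : ℕ) ≠ fmin B) →
    p^[k] (incl (hBA hp haa hBset) u) = incl (hBA hp haa hBset) ((restrict (hBA hp haa hBset) p)^[k] u) := by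
  intro k
  induction k with
  | zero => intro u _; rfl
  | succ k IH =>
    intro u hcond
    have hIH := IH u (fun i hi => hcond i (by omega))
    rw [Function.iterate_succ_apply', Function.iterate_succ_apply', hIH]
    set w := (restrict (hBA hp haa hBset) p)^[k] u with hw
    have hwne : (w : ℕ) ≠ fmin B := hcond k (by omega)
    have hcl : ((p (incl (hBA hp haa hBset) w) : ↥A) : ℕ) ∈ B :=
      closure_B hp haa hBset w.2 hwne
    rw [restrict, dif_pos ⟨hcl, hwne⟩]
    rfl

lemma match_B' : ∀ (k : ℕ) (u : ↥B),
    (∀ i < k, p^[i] (incl (hBA hp haa hBset) u) ≠ rOf aa p) →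
    p^[k] (incl (hBA hp haa hBset) u) = incl (hBA hp haa hBset) ((restrict (hBA hp haa hBset) p)^[k] u) := by
  intro k
  induction k with
  | zero => intro u _; rfl
  | succ k IH =>
    intro u hcond
    have hIH := IH u (fun i hi => hcond i (by omega))
    rw [Function.iterate_succ_apply', Function.iterate_succ_apply', hIH]
    set w := (restrict (hBA hp haa hBset) p)^[k] u with hw
    have hwne : (w : ℕ) ≠ fmin B := by
      intro heq
      apply hcond k (by omega)
      rw [hIH]
      exact Subtype.ext (by rw [R_coe hp haa hBset]; exact heq)
    have hcl : ((p (incl (hBA hp haa hBset) w) : ↥A) : ℕ) ∈ B :=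
      closure_B hp haa hBset w.2 hwne
    rw [restrict, dif_pos ⟨hcl, hwne⟩]
    rfl

lemma SubB_image {v : ↥B} (hv : (v : ℕ) ≠ fmin B) :
    Sub p (incl (hBA hp haa hBset) v)
      = (Sub (restrict (hBA hp haa hBset) p) v).image (incl (hBA hp haa hBset)) := by
  set hBA' : B ⊆ A := hBA hp haa hBset with hBAdef
  ext u'
  rw [Finset.mem_image]
  constructor
  · intro hu'
    obtain ⟨k, hk⟩ := mem_Sub.mp hu'
    have hu'B : (u' : ℕ) ∈ B := by
      refine (mem_B_iff hp haa hBset u').mpr (Sub_trans hu' ?_)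
      exact (mem_B_iff hp haa hBset _).mp v.2
    set u : ↥B := ⟨(u' : ℕ), hu'B⟩ with hu
    have hiu : incl hBA' u = u' := Subtype.ext rfl
    have hcond : ∀ i < k, p^[i] (incl hBA' u) ≠ rOf aa p := by
      intro i hi heq
      have h1 : p^[k] (incl hBA' u) = p^[k - i - 1] (p (p^[i] (incl hBA' u))) := by
        rw [← Function.iterate_succ_apply, ← Function.iterate_add_apply]
        congr 1
        omega
      have h2 : ((p (p^[i] (incl hBA' u)) : ↥A) : ℕ) = fmin A := by
        rw [heq]; exact p_rOf hp haa
      have h3 : ((p^[k] (incl hBA' u) : ↥A) : ℕ) = fmin A := by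
        rw [h1, (iterate_fix hp h2 _ : _ = _)]
        exact h2
      rw [hiu, hk] at h3
      exact hm0B hp haa hBset (h3 ▸ v.2)
    have := match_B' hp haa hBset k u hcond
    rw [hiu, hk] at this
    exact ⟨u, mem_Sub.mpr ⟨k, (incl_injective hBA' this.symm)⟩, hiu⟩
  · rintro ⟨u, hu, rfl⟩
    obtain ⟨k, hk⟩ := mem_Sub.mp hu
    have hcond : ∀ i < k, (((restrict hBA' p)^[i] u : ↥B) : ℕ) ≠ fmin B := by
      intro i hi heq
      have := restrict_iterate_fix (p := p) hBA' heq (k - i)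
      rw [← Function.iterate_add_apply] at this
      have hki : k - i + i = k := by omega
      rw [hki, hk] at this
      exact hv (by rw [this]; exact heq)
    have := match_B hp haa hBset k u hcond
    rw [hk] at this
    exact mem_Sub.mpr ⟨k, this⟩

end Transfer

end IncTree

namespace IncTree

open Finset

noncomputable def W (S : Finset ℕ) (p : ↥S → ↥S) : ℕ :=
  ∏ v ∈ Finset.univ.filter (fun v : ↥S => (v : ℕ) ≠ fmin S), (Sub p v).card

section TransferC

variable {A B : Finset ℕ} {aa : ↥A} {p : ↥A → ↥A}
variable (hp : Valid A p) (haa : (aa : ℕ) ≠ fmin A) (hBset : BsetOf aa p = B)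

lemma hm0A (aa : ↥A) : fmin A ∈ A := fmin_mem ⟨aa, aa.2⟩

include hp haa hBset

lemma fminC : fmin (A \ B) = fmin A := by
  refine fmin_eq_of (Finset.mem_sdiff.mpr ⟨hm0A aa, hm0B hp haa hBset⟩) ?_
  intro y hy
  exact fmin_le (Finset.mem_sdiff.mp hy).1

lemma closureC' {u : ↥A} (hu : (u : ℕ) ∈ A \ B) : ((p u : ↥A) : ℕ) ∈ A \ B :=
  Finset.mem_sdiff.mpr ⟨(p u).2, closure_C hp haa hBset (Finset.mem_sdiff.mp hu).2⟩

lemma match_C : ∀ (k : ℕ) (u : ↥(A \ B)),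
    p^[k] (incl Finset.sdiff_subset u) = incl Finset.sdiff_subset ((restrict Finset.sdiff_subset p)^[k] u) := by
  intro k
  induction k with
  | zero => intro u; rfl
  | succ k IH =>
    intro u
    rw [Function.iterate_succ_apply', Function.iterate_succ_apply', IH]
    set w := (restrict (Finset.sdiff_subset (s := A) (t := B)) p)^[k] u with hw
    by_cases hwf : (w : ℕ) = fmin (A \ B)
    · rw [restrict_fix Finset.sdiff_subset hwf]
      exact (hp _).1 (by rw [fminC hp haa hBset] at hwf; exact hwf)
    · rw [restrict, dif_pos ⟨closureC' hp haa hBset w.2, hwf⟩]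
      rfl

lemma B_orbit (u : ↥A) (hu : (u : ℕ) ∈ B) :
    ∀ k : ℕ, ((p^[k] u : ↥A) : ℕ) ∈ B ∨ ((p^[k] u : ↥A) : ℕ) = fmin A := by
  intro k
  induction k with
  | zero => exact Or.inl hu
  | succ k IH =>
    rw [Function.iterate_succ_apply']
    rcases IH with h | h
    · by_cases hf : ((p^[k] u : ↥A) : ℕ) = fmin B
      · right
        have : p^[k] u = rOf aa p := Subtype.ext (by rw [R_coe hp haa hBset]; exact hf)
        rw [this]
        exact p_rOf hp haa
      · exact Or.inl (closure_B hp haa hBset h hf)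
    · right
      rw [(hp _).1 h]
      exact h

lemma SubC_image {v : ↥(A \ B)} (hv : (v : ℕ) ≠ fmin A) :
    Sub p (incl Finset.sdiff_subset v)
      = (Sub (restrict Finset.sdiff_subset p) v).image (incl Finset.sdiff_subset) := by
  ext u'
  rw [Finset.mem_image]
  constructor
  · intro hu'
    obtain ⟨k, hk⟩ := mem_Sub.mp hu'
    have hu'C : (u' : ℕ) ∈ A \ B := by
      refine Finset.mem_sdiff.mpr ⟨u'.2, fun hmem => ?_⟩
      rcases B_orbit hp haa hBset u' hmem k with h | h
      · rw [hk] at h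
        exact (Finset.mem_sdiff.mp v.2).2 h
      · rw [hk] at h
        exact hv h
    set u : ↥(A \ B) := ⟨(u' : ℕ), hu'C⟩ with hu
    have hiu : incl Finset.sdiff_subset u = u' := Subtype.ext rfl
    have := match_C hp haa hBset k u
    rw [hiu, hk] at this
    exact ⟨u, mem_Sub.mpr ⟨k, incl_injective _ this.symm⟩, hiu⟩
  · rintro ⟨u, hu, rfl⟩
    obtain ⟨k, hk⟩ := mem_Sub.mp hu
    have := match_C hp haa hBset k u
    rw [hk] at this
    exact mem_Sub.mpr ⟨k, this⟩

lemma valid_q : Valid B (restrict (hBA hp haa hBset) p) := by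
  intro v
  constructor
  · intro hvf
    exact restrict_fix _ hvf
  · intro hvf
    rw [restrict, dif_pos ⟨closure_B hp haa hBset v.2 hvf, hvf⟩]
    exact (hp (incl (hBA hp haa hBset) v)).2
      (fun h => hm0B hp haa hBset (h ▸ v.2))

lemma valid_rC : Valid (A \ B) (restrict Finset.sdiff_subset p) := by
  intro v
  constructor
  · intro hvf
    exact restrict_fix _ hvf
  · intro hvf
    have hv' : ((incl (Finset.sdiff_subset (s := A) (t := B)) v : ↥A) : ℕ) ≠ fmin A := by
      rw [← fminC hp haa hBset]; exact hvf
    rw [restrict, dif_pos ⟨closureC' hp haa hBset v.2, hvf⟩]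
    exact (hp _).2 hv'

lemma card_Sub_rOf : (Sub p (rOf aa p)).card = B.card := by
  rw [← hBset, BsetOf]
  exact (Finset.card_image_of_injective _ (fun x y h => Subtype.ext h)).symm

lemma W_split :
    W A p = B.card * (W B (restrict (hBA hp haa hBset) p)
      * W (A \ B) (restrict Finset.sdiff_subset p)) := by
  rw [W, ← Finset.prod_filter_mul_prod_filter_not
    (Finset.univ.filter (fun v : ↥A => (v : ℕ) ≠ fmin A)) (fun v : ↥A => (v : ℕ) ∈ B)]
  have hs1 : (Finset.univ.filter (fun v : ↥A => (v : ℕ) ≠ fmin A)).filter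
      (fun v : ↥A => (v : ℕ) ∈ B) = Finset.univ.filter (fun v : ↥A => (v : ℕ) ∈ B) := by
    ext v
    simp only [Finset.mem_filter, Finset.mem_univ, true_and]
    exact ⟨fun h => h.2, fun h => ⟨fun hf => hm0B hp haa hBset (hf ▸ h), h⟩⟩
  have hRmem : rOf aa p ∈ Finset.univ.filter (fun v : ↥A => (v : ℕ) ∈ B) := by
    simp only [Finset.mem_filter, Finset.mem_univ, true_and]
    exact (mem_B_iff hp haa hBset _).mpr (self_mem_Sub _)
  rw [hs1, ← Finset.mul_prod_erase _ _ hRmem, card_Sub_rOf hp haa hBset]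
  have hs2 : (Finset.univ.filter (fun v : ↥A => (v : ℕ) ∈ B)).erase (rOf aa p)
      = Finset.univ.filter (fun v : ↥A => (v : ℕ) ∈ B ∧ (v : ℕ) ≠ fmin B) := by
    ext v
    simp only [Finset.mem_erase, Finset.mem_filter, Finset.mem_univ, true_and]
    constructor
    · rintro ⟨hne, hmem⟩
      exact ⟨hmem, fun hf => hne (Subtype.ext (by rw [R_coe hp haa hBset]; exact hf))⟩
    · rintro ⟨hmem, hne⟩
      exact ⟨fun hf => hne (by rw [hf, R_coe hp haa hBset]), hmem⟩
  have hprodB : ∏ v ∈ Finset.univ.filter (fun v : ↥A => (v : ℕ) ∈ B ∧ (v : ℕ) ≠ fmin B),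
      (Sub p v).card = W B (restrict (hBA hp haa hBset) p) := by
    rw [W]
    refine Finset.prod_bij (fun v hv => (⟨(v : ℕ),
      (Finset.mem_filter.mp hv).2.1⟩ : ↥B)) ?_ ?_ ?_ ?_
    · intro v hv
      simp only [Finset.mem_filter, Finset.mem_univ, true_and]
      exact (Finset.mem_filter.mp hv).2.2
    · intro x hx y hy hxy
      exact Subtype.ext (congrArg (fun t : ↥B => (t : ℕ)) hxy)
    · intro w hw
      refine ⟨incl (hBA hp haa hBset) w, ?_, Subtype.ext rfl⟩
      simp only [Finset.mem_filter, Finset.mem_univ, true_and]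
      exact ⟨w.2, (Finset.mem_filter.mp hw).2⟩
    · intro v hv
      have hvne : ((⟨(v : ℕ), (Finset.mem_filter.mp hv).2.1⟩ : ↥B) : ℕ) ≠ fmin B :=
        (Finset.mem_filter.mp hv).2.2
      have h1 := SubB_image hp haa hBset hvne
      have h2 : incl (hBA hp haa hBset) ⟨(v : ℕ), (Finset.mem_filter.mp hv).2.1⟩ = v :=
        Subtype.ext rfl
      rw [h2] at h1
      rw [h1, Finset.card_image_of_injective _ (incl_injective _)]
  have hs3 : (Finset.univ.filter (fun v : ↥A => (v : ℕ) ≠ fmin A)).filter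
      (fun v : ↥A => ¬ (v : ℕ) ∈ B)
      = Finset.univ.filter (fun v : ↥A => (v : ℕ) ∈ A \ B ∧ (v : ℕ) ≠ fmin A) := by
    ext v
    simp only [Finset.mem_filter, Finset.mem_univ, true_and, Finset.mem_sdiff]
    exact ⟨fun h => ⟨⟨v.2, h.2⟩, h.1⟩, fun h => ⟨h.2, h.1.2⟩⟩
  have hprodC : ∏ v ∈ Finset.univ.filter
      (fun v : ↥A => (v : ℕ) ∈ A \ B ∧ (v : ℕ) ≠ fmin A),
      (Sub p v).card = W (A \ B) (restrict Finset.sdiff_subset p) := by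
    rw [W]
    refine Finset.prod_bij (fun v hv => (⟨(v : ℕ),
      (Finset.mem_filter.mp hv).2.1⟩ : ↥(A \ B))) ?_ ?_ ?_ ?_
    · intro v hv
      simp only [Finset.mem_filter, Finset.mem_univ, true_and]
      rw [fminC hp haa hBset]
      exact (Finset.mem_filter.mp hv).2.2
    · intro x hx y hy hxy
      exact Subtype.ext (congrArg (fun t : ↥(A \ B) => (t : ℕ)) hxy)
    · intro w hw
      refine ⟨incl Finset.sdiff_subset w, ?_, Subtype.ext rfl⟩
      simp only [Finset.mem_filter, Finset.mem_univ, true_and]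
      refine ⟨w.2, ?_⟩
      have := (Finset.mem_filter.mp hw).2
      rw [fminC hp haa hBset] at this
      exact this
    · intro v hv
      have hvne : ((⟨(v : ℕ), (Finset.mem_filter.mp hv).2.1⟩ : ↥(A \ B)) : ℕ) ≠ fmin A :=
        (Finset.mem_filter.mp hv).2.2
      have h1 := SubC_image hp haa hBset hvne
      have h2 : incl (Finset.sdiff_subset (s := A) (t := B))
          ⟨(v : ℕ), (Finset.mem_filter.mp hv).2.1⟩ = v := Subtype.ext rfl
      rw [h2] at h1
      rw [h1, Finset.card_image_of_injective _ (incl_injective _)]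
  rw [hs2, hprodB, hs3, hprodC]
  ring

end TransferC

end IncTree

namespace IncTree

open Finset

section Glue

variable {A B : Finset ℕ}

lemma fminC' (hm0 : fmin A ∈ A) (hm0B : fmin A ∉ B) : fmin (A \ B) = fmin A := by
  refine fmin_eq_of (Finset.mem_sdiff.mpr ⟨hm0, hm0B⟩) ?_
  intro y hy
  exact fmin_le (Finset.mem_sdiff.mp hy).1

noncomputable def glue (hBA : B ⊆ A) (hm0 : fmin A ∈ A)
    (q : ↥B → ↥B) (r : ↥(A \ B) → ↥(A \ B)) : ↥A → ↥A := fun u =>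
  if hu : (u : ℕ) ∈ B then
    (if (u : ℕ) = fmin B then ⟨fmin A, hm0⟩ else incl hBA (q ⟨(u : ℕ), hu⟩))
  else incl Finset.sdiff_subset (r ⟨(u : ℕ), Finset.mem_sdiff.mpr ⟨u.2, hu⟩⟩)

variable (hBA : B ⊆ A) (hm0 : fmin A ∈ A) (hm0B : fmin A ∉ B)
variable {q : ↥B → ↥B} {r : ↥(A \ B) → ↥(A \ B)}

lemma glue_of_memB {u : ↥A} (hu : (u : ℕ) ∈ B) (hne : (u : ℕ) ≠ fmin B) :
    glue hBA hm0 q r u = incl hBA (q ⟨(u : ℕ), hu⟩) := by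
  rw [glue, dif_pos hu, if_neg hne]

lemma glue_of_fminB {u : ↥A} (hu : (u : ℕ) ∈ B) (he : (u : ℕ) = fmin B) :
    glue hBA hm0 q r u = ⟨fmin A, hm0⟩ := by
  rw [glue, dif_pos hu, if_pos he]

lemma glue_of_memC {u : ↥A} (hu : (u : ℕ) ∉ B) :
    glue hBA hm0 q r u
      = incl Finset.sdiff_subset (r ⟨(u : ℕ), Finset.mem_sdiff.mpr ⟨u.2, hu⟩⟩) := by
  rw [glue, dif_neg hu]

include hm0B

lemma fminB_ne (hBne : B.Nonempty) : fmin B ≠ fmin A := by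
  intro h
  exact hm0B (h ▸ fmin_mem hBne)

lemma valid_glue (hq : Valid B q) (hr : Valid (A \ B) r) :
    Valid A (glue hBA hm0 q r) := by
  intro v
  constructor
  · intro hv
    have hvB : (v : ℕ) ∉ B := hv ▸ hm0B
    rw [glue_of_memC hBA hm0 hvB]
    have hvC : ((⟨(v : ℕ), Finset.mem_sdiff.mpr ⟨v.2, hvB⟩⟩ : ↥(A \ B)) : ℕ) = fmin (A \ B) := by
      rw [fminC' hm0 hm0B]; exact hv
    rw [(hr _).1 hvC]
    exact Subtype.ext rfl
  · intro hv
    by_cases hvB : (v : ℕ) ∈ B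
    · by_cases hvf : (v : ℕ) = fmin B
      · rw [glue_of_fminB hBA hm0 hvB hvf]
        have h1 : fmin A ≤ (v : ℕ) := fmin_le v.2
        exact lt_of_le_of_ne h1 (Ne.symm hv)
      · rw [glue_of_memB hBA hm0 hvB hvf]
        exact (hq _).2 hvf
    · rw [glue_of_memC hBA hm0 hvB]
      refine (hr _).2 ?_
      rw [fminC' hm0 hm0B]
      exact hv

lemma glue_match_B : ∀ (k : ℕ) (u : ↥B), (∀ i < k, ((q^[i] u : ↥B) : ℕ) ≠ fmin B) →
    (glue hBA hm0 q r)^[k] (incl hBA u) = incl hBA (q^[k] u) := by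
  intro k
  induction k with
  | zero => intro u _; rfl
  | succ k IH =>
    intro u hcond
    rw [Function.iterate_succ_apply', Function.iterate_succ_apply',
      IH u (fun i hi => hcond i (by omega))]
    set w := q^[k] u with hw
    have hwne : (w : ℕ) ≠ fmin B := hcond k (by omega)
    rw [glue_of_memB hBA hm0 w.2 hwne]
    rfl

omit hm0B in
lemma glue_match_C : ∀ (k : ℕ) (u : ↥(A \ B)),
    (glue hBA hm0 q r)^[k] (incl Finset.sdiff_subset u)
      = incl Finset.sdiff_subset (r^[k] u) := by
  intro k
  induction k with
  | zero => intro u; rfl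
  | succ k IH =>
    intro u
    rw [Function.iterate_succ_apply', Function.iterate_succ_apply', IH]
    set w := r^[k] u with hw
    have hwC : ((incl (Finset.sdiff_subset (s := A) (t := B)) w : ↥A) : ℕ) ∉ B :=
      (Finset.mem_sdiff.mp w.2).2
    rw [glue_of_memC hBA hm0 hwC]
    rfl

variable {aa : ↥A} (haB : (aa : ℕ) ∈ B)

include haB

lemma glue_reach (hq : Valid B q) :
    ∃ k, (glue hBA hm0 q r)^[k] aa = incl hBA (⟨fmin B, fmin_mem ⟨_, haB⟩⟩ : ↥B) := by
  have h := reach_root hq ⟨(aa : ℕ), haB⟩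
  classical
  refine ⟨Nat.find h, ?_⟩
  have hk0 := Nat.find_spec h
  have hcond : ∀ i < Nat.find h, ((q^[i] (⟨(aa : ℕ), haB⟩ : ↥B) : ↥B) : ℕ) ≠ fmin B :=
    fun i hi => Nat.find_min h hi
  have hmatch := glue_match_B (r := r) hBA hm0 hm0B (Nat.find h) ⟨(aa : ℕ), haB⟩ hcond
  have haa' : incl hBA (⟨(aa : ℕ), haB⟩ : ↥B) = aa := Subtype.ext rfl
  rw [haa'] at hmatch
  rw [hmatch]
  exact congrArg _ (Subtype.ext hk0)

end Glue

end IncTree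

namespace IncTree

open Finset

section Glue2

variable {A B : Finset ℕ}
variable (hBA : B ⊆ A) (hm0 : fmin A ∈ A) (hm0B : fmin A ∉ B)
variable {q : ↥B → ↥B} {r : ↥(A \ B) → ↥(A \ B)}
variable {aa : ↥A} (haB : (aa : ℕ) ∈ B)

include hm0B haB

lemma glue_rOf (hq : Valid B q) (hr : Valid (A \ B) r) :
    rOf aa (glue hBA hm0 q r) = incl hBA (⟨fmin B, fmin_mem ⟨_, haB⟩⟩ : ↥B) := by
  have haa : (aa : ℕ) ≠ fmin A := fun h => hm0B (h ▸ haB)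
  refine (rOf_unique (valid_glue hBA hm0 hm0B hq hr) haa ?_ ?_ ?_).symm
  · exact fminB_ne hm0B ⟨_, haB⟩
  · rw [glue_of_fminB hBA hm0 (fmin_mem ⟨_, haB⟩) rfl]
  · exact glue_reach hBA hm0 hm0B haB hq

lemma glue_Bset (hq : Valid B q) (hr : Valid (A \ B) r) :
    BsetOf aa (glue hBA hm0 q r) = B := by
  rw [BsetOf, glue_rOf hBA hm0 hm0B haB hq hr]
  ext x
  rw [Finset.mem_image]
  constructor
  · rintro ⟨u, hu, rfl⟩
    obtain ⟨k, hk⟩ := mem_Sub.mp hu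
    by_contra hxB
    have hiu : incl Finset.sdiff_subset (⟨(u : ℕ), Finset.mem_sdiff.mpr ⟨u.2, hxB⟩⟩ : ↥(A \ B)) = u :=
      Subtype.ext rfl
    have := glue_match_C (q := q) (r := r) hBA hm0 k ⟨(u : ℕ), Finset.mem_sdiff.mpr ⟨u.2, hxB⟩⟩
    rw [hiu, hk] at this
    have hcoe : fmin B = ((r^[k] ⟨(u : ℕ), Finset.mem_sdiff.mpr ⟨u.2, hxB⟩⟩ : ↥(A \ B)) : ℕ) :=
      congrArg (fun t : ↥A => (t : ℕ)) this
    exact (Finset.mem_sdiff.mp (r^[k] ⟨(u : ℕ), Finset.mem_sdiff.mpr ⟨u.2, hxB⟩⟩).2).2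
      (hcoe ▸ fmin_mem ⟨_, haB⟩)
  · intro hxB
    refine ⟨⟨x, hBA hxB⟩, ?_, rfl⟩
    obtain ⟨k, hk⟩ := glue_reach (aa := ⟨x, hBA hxB⟩) hBA hm0 hm0B hxB hq
    exact mem_Sub.mpr ⟨k, hk⟩

omit haB in
lemma restrict_glue_B (hq : Valid B q) :
    restrict hBA (glue hBA hm0 q r) = q := by
  funext v
  by_cases hvf : (v : ℕ) = fmin B
  · rw [restrict_fix _ hvf]
    exact ((hq v).1 hvf).symm
  · have hiv : (⟨((incl hBA v : ↥A) : ℕ), v.2⟩ : ↥B) = v := Subtype.ext rfl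
    have hg : glue hBA hm0 q r (incl hBA v) = incl hBA (q v) := by
      rw [glue_of_memB hBA hm0 v.2 hvf, hiv]
    rw [restrict, dif_pos ⟨by rw [hg]; exact (q v).2, hvf⟩]
    exact Subtype.ext (congrArg (fun t : ↥A => (t : ℕ)) hg)

omit haB in
lemma restrict_glue_C (hr : Valid (A \ B) r) :
    restrict Finset.sdiff_subset (glue hBA hm0 q r) = r := by
  funext v
  by_cases hvf : (v : ℕ) = fmin (A \ B)
  · rw [restrict_fix _ hvf]
    exact ((hr v).1 hvf).symm
  · have hvB : (v : ℕ) ∉ B := (Finset.mem_sdiff.mp v.2).2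
    have hiv : (⟨((incl (Finset.sdiff_subset (s := A) (t := B)) v : ↥A) : ℕ),
        Finset.mem_sdiff.mpr ⟨(incl Finset.sdiff_subset v).2, hvB⟩⟩ : ↥(A \ B)) = v :=
      Subtype.ext rfl
    have hg : glue hBA hm0 q r (incl Finset.sdiff_subset v) = incl Finset.sdiff_subset (r v) := by
      rw [glue_of_memC hBA hm0 hvB, hiv]
    rw [restrict, dif_pos ⟨by rw [hg]; exact (r v).2, hvf⟩]
    exact Subtype.ext (congrArg (fun t : ↥A => (t : ℕ)) hg)

end Glue2

section GlueRestrict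

variable {A B : Finset ℕ} {aa : ↥A} {p : ↥A → ↥A}
variable (hp : Valid A p) (haa : (aa : ℕ) ≠ fmin A) (hBset : BsetOf aa p = B)
  (hm0 : fmin A ∈ A)

include hp haa hBset

lemma glue_restrict :
    glue (hBA hp haa hBset) hm0 (restrict (hBA hp haa hBset) p)
      (restrict Finset.sdiff_subset p) = p := by
  funext u
  by_cases hu : (u : ℕ) ∈ B
  · by_cases huf : (u : ℕ) = fmin B
    · rw [glue_of_fminB _ _ hu huf]
      have hur : u = rOf aa p := Subtype.ext (by rw [R_coe hp haa hBset]; exact huf)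
      rw [hur]
      exact Subtype.ext (p_rOf hp haa).symm
    · rw [glue_of_memB _ _ hu huf]
      have hiu : incl (hBA hp haa hBset) ⟨(u : ℕ), hu⟩ = u := Subtype.ext rfl
      have hc1 : ((p (incl (hBA hp haa hBset) ⟨(u : ℕ), hu⟩) : ↥A) : ℕ) ∈ B := by
        rw [hiu]; exact closure_B hp haa hBset hu huf
      rw [restrict, dif_pos ⟨hc1, huf⟩]
      exact Subtype.ext (congrArg (fun t : ↥A => ((p t : ↥A) : ℕ)) hiu)
  · rw [glue_of_memC _ _ hu]
    have hiu : incl Finset.sdiff_subset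
        (⟨(u : ℕ), Finset.mem_sdiff.mpr ⟨u.2, hu⟩⟩ : ↥(A \ B)) = u := Subtype.ext rfl
    by_cases huf : ((⟨(u : ℕ), Finset.mem_sdiff.mpr ⟨u.2, hu⟩⟩ : ↥(A \ B)) : ℕ) = fmin (A \ B)
    · rw [restrict_fix _ huf, hiu]
      exact ((hp u).1 (by rw [← fminC hp haa hBset]; exact huf)).symm
    · have hc1 : ((p (incl Finset.sdiff_subset
          (⟨(u : ℕ), Finset.mem_sdiff.mpr ⟨u.2, hu⟩⟩ : ↥(A \ B))) : ↥A) : ℕ) ∈ A \ B := by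
        rw [hiu]; exact closureC' hp haa hBset (Finset.mem_sdiff.mpr ⟨u.2, hu⟩)
      rw [restrict, dif_pos ⟨hc1, huf⟩]
      exact Subtype.ext (congrArg (fun t : ↥A => ((p t : ↥A) : ℕ)) hiu)

end GlueRestrict

end IncTree

open Finset IncTree

open scoped Classical in
/-- `I(A)`: the number of unordered increasing trees on `A` (encoded by parent functions
`p : A → A` fixing the root `min A` and decreasing off the root), weighted by
`∏_{i ∈ A ∖ {min A}} |h_T(i)|`, the product of subtree sizes over non-root vertices. -/
noncomputable def Icount (A : Finset ℕ) : ℕ :=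
  ∑ p ∈ (Finset.univ : Finset (↥A → ↥A)).filter
      (fun p => ∀ v : ↥A, ((v : ℕ) = fmin A → p v = v) ∧ ((v : ℕ) ≠ fmin A → (p v : ℕ) < (v : ℕ))),
    ∏ v ∈ Finset.univ.filter (fun v : ↥A => (v : ℕ) ≠ fmin A),
      (Finset.univ.filter (fun u : ↥A => ∃ k : ℕ, p^[k] u = v)).card

lemma Icount_eq_sum (A : Finset ℕ) :
    Icount A = ∑ p ∈ (Finset.univ : Finset (↥A → ↥A)).filter (fun p => Valid A p), W A p := by
  rw [Icount]
  refine Finset.sum_congr ?_ fun p _ => rfl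
  ext p
  simp only [Finset.mem_filter, Finset.mem_univ, true_and]
  exact Iff.rfl

lemma Icount_card_one {A : Finset ℕ} (h : A.card = 1) : Icount A = 1 := by
  obtain ⟨x, hx⟩ := Finset.card_eq_one.mp h
  have hcoe : ∀ v : ↥A, (v : ℕ) = x := by
    intro v
    have hv : (v : ℕ) ∈ ({x} : Finset ℕ) := hx ▸ v.2
    exact Finset.mem_singleton.mp hv
  have hfx : fmin A = x := by
    refine fmin_eq_of ?_ ?_
    · rw [hx]; exact Finset.mem_singleton_self x
    · intro y hy
      rw [hx, Finset.mem_singleton] at hy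
      omega
  have hvalid : ∀ p : ↥A → ↥A, Valid A p := by
    intro p v
    constructor
    · intro _
      apply Subtype.ext
      rw [hcoe (p v), hcoe v]
    · intro hne
      exact absurd (by rw [hcoe v, hfx]) hne
  have hfilter : (Finset.univ : Finset (↥A → ↥A)).filter (fun p => Valid A p) = Finset.univ :=
    Finset.filter_true_of_mem (fun p _ => hvalid p)
  have hW : ∀ p : ↥A → ↥A, W A p = 1 := by
    intro p
    rw [W]
    have hempty : Finset.univ.filter (fun v : ↥A => (v : ℕ) ≠ fmin A) = ∅ := by
      apply Finset.filter_false_of_mem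
      intro v _
      rw [hcoe v, hfx]
      simp
    rw [hempty, Finset.prod_empty]
  rw [Icount_eq_sum, hfilter, Finset.sum_congr rfl (fun p _ => hW p), Finset.sum_const,
    smul_eq_mul, mul_one, Finset.card_univ, Fintype.card_fun, Fintype.card_coe, h, pow_one]

lemma Icount_rec (A : Finset ℕ) (a : ℕ) (ha : a ∈ A) (hane : a ≠ fmin A) :
    Icount A = ∑ B ∈ A.powerset.filter (fun B => a ∈ B ∧ fmin A ∉ B),
      B.card * (Icount B * Icount (A \ B)) := by
  have haa : ((⟨a, ha⟩ : ↥A) : ℕ) ≠ fmin A := hane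
  have hm0 : fmin A ∈ A := fmin_mem ⟨a, ha⟩
  have hmaps : ∀ p ∈ (Finset.univ : Finset (↥A → ↥A)).filter (fun p => Valid A p),
      BsetOf ⟨a, ha⟩ p ∈ A.powerset.filter (fun B => a ∈ B ∧ fmin A ∉ B) := by
    intro p hp
    have hpv : Valid A p := (Finset.mem_filter.mp hp).2
    rw [Finset.mem_filter, Finset.mem_powerset]
    exact ⟨BsetOf_subset, (mem_BsetOf (u := ⟨a, ha⟩)).mpr aa_mem_Sub_rOf,
      fmin_not_mem_BsetOf hpv haa⟩
  rw [Icount_eq_sum, ← Finset.sum_fiberwise_of_maps_to hmaps]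
  refine Finset.sum_congr rfl fun B hB => ?_
  rw [Finset.mem_filter, Finset.mem_powerset] at hB
  have hBsub : B ⊆ A := hB.1
  have haB : a ∈ B := hB.2.1
  have hm0B' : fmin A ∉ B := hB.2.2
  have hstep : ∑ p ∈ ((Finset.univ : Finset (↥A → ↥A)).filter (fun p => Valid A p)).filter
      (fun p => BsetOf ⟨a, ha⟩ p = B), W A p
      = ∑ x ∈ ((Finset.univ : Finset (↥B → ↥B)).filter (fun q => Valid B q)) ×ˢ
          ((Finset.univ : Finset (↥(A \ B) → ↥(A \ B))).filter (fun r => Valid (A \ B) r)),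
          B.card * (W B x.1 * W (A \ B) x.2) := by
    refine Finset.sum_nbij' (i := fun p => (restrict hBsub p, restrict Finset.sdiff_subset p))
      (j := fun x => glue hBsub hm0 x.1 x.2) ?_ ?_ ?_ ?_ ?_
    · intro p hp
      rw [Finset.mem_filter, Finset.mem_filter] at hp
      rw [Finset.mem_product, Finset.mem_filter, Finset.mem_filter]
      exact ⟨⟨Finset.mem_univ _, valid_q hp.1.2 haa hp.2⟩,
        ⟨Finset.mem_univ _, valid_rC hp.1.2 haa hp.2⟩⟩
    · intro x hx
      rw [Finset.mem_product, Finset.mem_filter, Finset.mem_filter] at hx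
      rw [Finset.mem_filter, Finset.mem_filter]
      exact ⟨⟨Finset.mem_univ _, valid_glue hBsub hm0 hm0B' hx.1.2 hx.2.2⟩,
        glue_Bset hBsub hm0 hm0B' haB hx.1.2 hx.2.2⟩
    · intro p hp
      rw [Finset.mem_filter, Finset.mem_filter] at hp
      exact glue_restrict hp.1.2 haa hp.2 hm0
    · intro x hx
      rw [Finset.mem_product, Finset.mem_filter, Finset.mem_filter] at hx
      exact Prod.ext (restrict_glue_B hBsub hm0 hm0B' hx.1.2)
        (restrict_glue_C hBsub hm0 hm0B' hx.2.2)
    · intro p hp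
      rw [Finset.mem_filter, Finset.mem_filter] at hp
      exact W_split hp.1.2 haa hp.2
  rw [hstep, Finset.sum_product]
  have hinner : ∀ qq ∈ (Finset.univ : Finset (↥B → ↥B)).filter (fun q => Valid B q),
      ∑ rr ∈ (Finset.univ : Finset (↥(A \ B) → ↥(A \ B))).filter (fun r => Valid (A \ B) r),
        B.card * (W B qq * W (A \ B) rr) = B.card * (W B qq * Icount (A \ B)) := by
    intro qq _
    rw [← Finset.mul_sum, ← Finset.mul_sum, ← Icount_eq_sum]
  rw [Finset.sum_congr rfl hinner, ← Finset.mul_sum, ← Finset.sum_mul, ← Icount_eq_sum]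


lemma sum_formula (A : Finset ℕ) (hA : 2 ≤ A.card) (a : ℕ) (ha : a ∈ A) (hane : a ≠ fmin A)
    (f : ℕ → ℕ)
    (hf : ∀ j, j ≤ A.card - 2 →
      f (j + 1) = (j + 1) ^ j * (A.card - 2 - j + 1) ^ (A.card - 2 - j - 1)) :
    ∑ B ∈ A.powerset.filter (fun B => a ∈ B ∧ fmin A ∉ B), f B.card
      = A.card ^ (A.card - 2) := by
  rw [sum_split A hA a ha hane f]
  have hr : A.card - 1 = (A.card - 2) + 1 := by omega
  rw [hr]
  have hterm : ∀ j ∈ Finset.range ((A.card - 2) + 1),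
      (A.card - 2).choose j * f (j + 1)
      = (A.card - 2).choose j * ((j + 1) ^ j
          * ((A.card - 2) - j + 1) ^ ((A.card - 2) - j - 1)) := by
    intro j hj
    rw [hf j (by simpa [Nat.lt_succ_iff] using hj)]
  rw [Finset.sum_congr rfl hterm,
    Finset.sum_congr rfl (fun j _ => (mul_assoc _ _ _).symm), key_identity (A.card - 2)]
  congr 1
  omega

lemma pow_step (j : ℕ) : (j + 1) * (j + 1) ^ (j + 1 - 2) = (j + 1) ^ j := by
  rcases j with _ | j'
  · norm_num
  · have h : j' + 1 + 1 - 2 = j' := by omega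
    rw [h, pow_succ]
    ring

lemma Icount_eq : ∀ (n : ℕ), ∀ (A : Finset ℕ), A.card = n → 1 ≤ n →
    Icount A = n ^ (n - 2) := by
  intro n
  induction n using Nat.strong_induction_on with
  | _ n IH =>
    intro A hcard hn
    rcases eq_or_lt_of_le hn with h1 | h2
    · rw [Icount_card_one (by omega), ← h1]
      norm_num
    · have hA2 : 2 ≤ A.card := by omega
      have hne : A.Nonempty := Finset.card_pos.mp (by omega)
      set a := A.max' hne with hadef
      have ha : a ∈ A := A.max'_mem hne
      have hlt : A.min' hne < A.max' hne := Finset.min'_lt_max'_of_card A (by omega)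
      have hane : a ≠ fmin A := by
        intro h
        rw [fmin_eq_min' hne] at h
        omega
      rw [Icount_rec A a ha hane]
      have hm0 : fmin A ∈ A := fmin_mem hne
      have hcongr : ∀ B ∈ A.powerset.filter (fun B => a ∈ B ∧ fmin A ∉ B),
          B.card * (Icount B * Icount (A \ B))
            = (fun c => c * (c ^ (c - 2) * ((n - c) ^ (n - c - 2)))) B.card := by
        intro B hB
        rw [Finset.mem_filter, Finset.mem_powerset] at hB
        have hBssub : B ⊂ A :=
          (Finset.ssubset_iff_of_subset hB.1).mpr ⟨fmin A, hm0, hB.2.2⟩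
        have hBlt : B.card < n := hcard ▸ Finset.card_lt_card hBssub
        have hB1 : 1 ≤ B.card := Finset.card_pos.mpr ⟨a, hB.2.1⟩
        have hCssub : A \ B ⊂ A :=
          ⟨Finset.sdiff_subset, fun hsub => (Finset.mem_sdiff.mp (hsub ha)).2 hB.2.1⟩
        have hClt : (A \ B).card < n := hcard ▸ Finset.card_lt_card hCssub
        have hC1 : 1 ≤ (A \ B).card :=
          Finset.card_pos.mpr ⟨fmin A, Finset.mem_sdiff.mpr ⟨hm0, hB.2.2⟩⟩
        have hCcard : (A \ B).card = n - B.card := by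
          rw [Finset.card_sdiff_of_subset hB.1, hcard]
        rw [IH B.card hBlt B rfl hB1, IH (A \ B).card hClt (A \ B) rfl hC1, hCcard]
      rw [Finset.sum_congr rfl hcongr, ← hcard]
      refine sum_formula A hA2 a ha hane
        (fun c => c * (c ^ (c - 2) * ((A.card - c) ^ (A.card - c - 2)))) ?_
      intro j hj
      have h3 : A.card - (j + 1) - 2 = A.card - 2 - j - 1 := by omega
      have h2' : A.card - (j + 1) = A.card - 2 - j + 1 := by omega
      rw [h3, h2', ← pow_step j]
      ring

open scoped Classical in
/-- Counting version of the `Θ` recursion: `I(A) = |A|^{|A|-2}` for `|A| ≥ 2`, and for any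
fixed `a ∈ A ∖ {min A}`,
`|A|^{|A|-2} = ∑_{B ⊔ C = A, min A ∈ C, a ∈ B} |B| · |B|^{|B|-2} · |C|^{|C|-2}`
(with `k^{k-2}` interpreted as `1` when `k = 1`, which is automatic with truncated
subtraction). -/
theorem Icount_eq_and_recursion (A : Finset ℕ) (hA : 2 ≤ A.card) (hpos : ∀ i ∈ A, 0 < i) :
    Icount A = A.card ^ (A.card - 2) ∧
      ∀ a ∈ A, a ≠ fmin A →
        A.card ^ (A.card - 2) =
          ∑ B ∈ A.powerset.filter (fun B => a ∈ B ∧ fmin A ∉ B),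
            B.card * B.card ^ (B.card - 2) * (A \ B).card ^ ((A \ B).card - 2) := by
  constructor
  · exact Icount_eq A.card A rfl (by omega)
  · intro a ha hane
    have hcongr : ∀ B ∈ A.powerset.filter (fun B => a ∈ B ∧ fmin A ∉ B),
        B.card * B.card ^ (B.card - 2) * (A \ B).card ^ ((A \ B).card - 2)
          = (fun c => c * c ^ (c - 2) * (A.card - c) ^ (A.card - c - 2)) B.card := by
      intro B hB
      rw [Finset.mem_filter, Finset.mem_powerset] at hB
      rw [Finset.card_sdiff_of_subset hB.1]
    rw [Finset.sum_congr rfl hcongr]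
    refine (sum_formula A hA a ha hane
      (fun c => c * c ^ (c - 2) * (A.card - c) ^ (A.card - c - 2)) ?_).symm
    intro j hj
    have h3 : A.card - (j + 1) - 2 = A.card - 2 - j - 1 := by omega
    have h2' : A.card - (j + 1) = A.card - 2 - j + 1 := by omega
    rw [h3, h2', ← pow_step j]
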